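/- Along the saddle-point flow ẋ = -∇f(x) - A^Tλ - ρA^T(Ax-b), λ̇ = Ax - b with f convex and differentiable, the function V(x,λ) = ½‖x - x*‖² + ½‖λ - λ*‖² is nonincreasing, where (x*, λ*) satisfies ∇f(x*) + A^Tλ* = 0 and Ax* = b; specifically, the time derivative of V along solutions satisfies V̇ ≤ -ρ‖Ax - b‖² ≤ 0. -/

import Mathlib

open Matrix

private lemma dot_hasDerivAt {n : ℕ} {u w : ℝ → Fin n → ℝ} {u' w' : Fin n → ℝ} {t : ℝ}
    (hu : HasDerivAt u u' t) (hw : HasDerivAt w w' t) :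
    HasDerivAt (fun s => u s ⬝ᵥ w s) (u' ⬝ᵥ w t + u t ⬝ᵥ w') t := by
  have hu' := hasDerivAt_pi.mp hu
  have hw' := hasDerivAt_pi.mp hw
  simp only [dotProduct]
  rw [← Finset.sum_add_distrib]
  exact HasDerivAt.fun_sum fun i _ => (hu' i).mul (hw' i)

/-- Along the saddle-point flow `ẋ = -∇f(x) - Aᵀλ - ρAᵀ(Ax-b)`, `λ̇ = Ax - b`, with `f`
convex differentiable and `(x*, λ*)` a primal-dual optimal pair, the Lyapunov function
`V = ½‖x-x*‖² + ½‖λ-λ*‖²` has time derivative `V̇ ≤ -ρ‖Ax-b‖² ≤ 0` along solutions, and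
is therefore nonincreasing. -/
theorem saddle_point_flow_lyapunov_decrease
    {n m : ℕ} (f : (Fin n → ℝ) → ℝ) (g : (Fin n → ℝ) → (Fin n → ℝ))
    (A : Matrix (Fin m) (Fin n) ℝ) (b : Fin m → ℝ) (ρ : ℝ) (hρ : 0 < ρ)
    -- monotonicity of the gradient of the convex function `f`:
    (hmono : ∀ x z : Fin n → ℝ, 0 ≤ (g x - g z) ⬝ᵥ (x - z))
    (xs : Fin n → ℝ) (ls : Fin m → ℝ)
    (hstat : g xs + ls ᵥ* A = 0) (hfeas : A *ᵥ xs = b)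
    (x : ℝ → (Fin n → ℝ)) (lam : ℝ → (Fin m → ℝ))
    (hx : ∀ t, HasDerivAt x (-(g (x t)) - lam t ᵥ* A - ρ • ((A *ᵥ x t - b) ᵥ* A)) t)
    (hlam : ∀ t, HasDerivAt lam (A *ᵥ x t - b) t)
    (V : ℝ → ℝ)
    (hV : ∀ t, V t = 1 / 2 * ((x t - xs) ⬝ᵥ (x t - xs)) +
                     1 / 2 * ((lam t - ls) ⬝ᵥ (lam t - ls))) :
    (∀ t, ∃ v : ℝ, HasDerivAt V v t ∧
        v ≤ -ρ * ((A *ᵥ x t - b) ⬝ᵥ (A *ᵥ x t - b)) ∧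
        -ρ * ((A *ᵥ x t - b) ⬝ᵥ (A *ᵥ x t - b)) ≤ 0) ∧
    ∀ s t : ℝ, s ≤ t → V t ≤ V s := by
  have hVfun : V = fun t => 1 / 2 * ((x t - xs) ⬝ᵥ (x t - xs)) +
      1 / 2 * ((lam t - ls) ⬝ᵥ (lam t - ls)) := funext hV
  set D : ℝ → (Fin n → ℝ) :=
    fun t => -(g (x t)) - lam t ᵥ* A - ρ • ((A *ᵥ x t - b) ᵥ* A) with hD
  set vfun : ℝ → ℝ :=
    fun t => D t ⬝ᵥ (x t - xs) + (A *ᵥ x t - b) ⬝ᵥ (lam t - ls) with hvfun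
  have hVder : ∀ t, HasDerivAt V (vfun t) t := by
    intro t
    have h1 := dot_hasDerivAt ((hx t).sub_const xs) ((hx t).sub_const xs)
    have h2 := dot_hasDerivAt ((hlam t).sub_const ls) ((hlam t).sub_const ls)
    have := ((h1.const_mul (1/2 : ℝ)).add (h2.const_mul (1/2 : ℝ)))
    rw [hVfun]
    refine HasDerivAt.congr_deriv this ?_
    rw [dotProduct_comm (x t - xs), dotProduct_comm (lam t - ls)]
    ring
  have key : ∀ t, vfun t ≤ -ρ * ((A *ᵥ x t - b) ⬝ᵥ (A *ᵥ x t - b)) := by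
    intro t
    have hr : A *ᵥ x t - b = A *ᵥ (x t - xs) := by rw [mulVec_sub, hfeas]
    have hgxs : g xs = -(ls ᵥ* A) := eq_neg_of_add_eq_zero_left hstat
    have hM := hmono (x t) xs
    have h1 : (lam t ᵥ* A) ⬝ᵥ (x t - xs) = lam t ⬝ᵥ (A *ᵥ x t - b) := by
      rw [hr, ← dotProduct_mulVec]
    have h2 : (ls ᵥ* A) ⬝ᵥ (x t - xs) = ls ⬝ᵥ (A *ᵥ x t - b) := by
      rw [hr, ← dotProduct_mulVec]
    have h3 : ρ * (((A *ᵥ x t - b) ᵥ* A) ⬝ᵥ (x t - xs)) =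
        ρ * ((A *ᵥ x t - b) ⬝ᵥ (A *ᵥ x t - b)) := by
      rw [← dotProduct_mulVec, ← hr]
    have h4 : (A *ᵥ x t - b) ⬝ᵥ (lam t - ls) =
        lam t ⬝ᵥ (A *ᵥ x t - b) - ls ⬝ᵥ (A *ᵥ x t - b) := by
      rw [dotProduct_sub, dotProduct_comm (A *ᵥ x t - b) (lam t),
        dotProduct_comm (A *ᵥ x t - b) ls]
    have h5 : g (x t) ⬝ᵥ (x t - xs) =
        (g (x t) - g xs) ⬝ᵥ (x t - xs) - ls ⬝ᵥ (A *ᵥ x t - b) := by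
      rw [sub_dotProduct, hgxs, neg_dotProduct, h2]; ring
    simp only [hvfun, hD]
    rw [sub_dotProduct, sub_dotProduct, neg_dotProduct, smul_dotProduct, smul_eq_mul]
    linarith
  refine ⟨?_, ?_⟩
  · intro t
    refine ⟨vfun t, hVder t, key t, ?_⟩
    have : 0 ≤ (A *ᵥ x t - b) ⬝ᵥ (A *ᵥ x t - b) := by
      unfold dotProduct
      exact Finset.sum_nonneg fun i _ => mul_self_nonneg _
    nlinarith
  · intro s t hst
    have : Antitone V :=
      antitone_of_deriv_nonpos (fun t => (hVder t).differentiableAt) (fun t => by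
        rw [(hVder t).deriv]
        have h0 : 0 ≤ (A *ᵥ x t - b) ⬝ᵥ (A *ᵥ x t - b) := by
          unfold dotProduct
          exact Finset.sum_nonneg fun i _ => mul_self_nonneg _
        nlinarith [key t])
    exact this hst
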